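/- Let d be a positive integer and let ∇J ∈ ℝ^d, d_k ∈ ℝ^d with d_k ≠ 0, and set ê = d_k − ∇J. If ‖ê‖ ≤ (1/2)‖∇J‖, then −⟨∇J, d_k⟩/‖d_k‖ ≤ −(1/3)‖∇J‖. -/

import Mathlib

theorem normalized_descent_small_error (d : ℕ) (hd : 0 < d)
    (gradJ dk : EuclideanSpace ℝ (Fin d)) (hdk : dk ≠ 0)
    (h : ‖dk - gradJ‖ ≤ (1 / 2) * ‖gradJ‖) :
    -inner ℝ gradJ dk / ‖dk‖ ≤ -(1 / 3) * ‖gradJ‖ := by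
  have hdk' : (0:ℝ) < ‖dk‖ := norm_pos_iff.mpr hdk
  rw [neg_mul, neg_div, neg_le_neg_iff, le_div_iff₀ hdk']
  have h1 : (inner ℝ gradJ dk : ℝ) = ‖gradJ‖^2 + inner ℝ gradJ (dk - gradJ) := by
    rw [inner_sub_right, real_inner_self_eq_norm_sq]; ring
  have h2 : |(inner ℝ gradJ (dk - gradJ) : ℝ)| ≤ ‖gradJ‖ * ‖dk - gradJ‖ :=
    abs_real_inner_le_norm _ _
  have h3 : ‖dk‖ ≤ ‖gradJ‖ + ‖dk - gradJ‖ := by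
    calc ‖dk‖ = ‖gradJ + (dk - gradJ)‖ := by rw [add_sub_cancel]
    _ ≤ _ := norm_add_le _ _
  have h4 := abs_le.mp h2
  nlinarith [norm_nonneg gradJ, norm_nonneg (dk - gradJ)]
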